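/- Let G be a k-connected graph. Then the following are equivalent: (i) every proper k-separation of G separates two (k+1)-blocks (i.e., for every proper k-separation (A,B) there exist (k+1)-blocks X ⊆ A and Y ⊆ B with X ⊄ A∩B and Y ⊄ A∩B separated by (A,B)); (ii) no k-separation of G is T-shaped. -/

import Mathlib

variable {V : Type*}

/-- `S` separates `u` from `v` in `G`: neither lies in `S` and every walk meets `S`. -/
def SepBy (G : SimpleGraph V) (S : Set V) (u v : V) : Prop :=
  u ∉ S ∧ v ∉ S ∧ ∀ p : G.Walk u v, ∃ w ∈ p.support, w ∈ S

/-- `X` is (≤k)-inseparable: no set of at most `k` vertices separates two of its vertices. -/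
def Insep (G : SimpleGraph V) (k : ℕ) (X : Set V) : Prop :=
  ∀ S : Finset V, S.card ≤ k → ∀ u ∈ X, ∀ v ∈ X, ¬ SepBy G (S : Set V) u v

/-- A `k`-block: a maximal (≤(k-1))-inseparable set of at least `k` vertices. -/
def IsBlockN (G : SimpleGraph V) (k : ℕ) (B : Set V) : Prop :=
  k ≤ B.ncard ∧ Insep G (k - 1) B ∧
    ∀ B' : Set V, B ⊆ B' → Insep G (k - 1) B' → B' = B

/-- `(A,B)` is a separation of `G`. -/
def IsSepn (G : SimpleGraph V) (A B : Set V) : Prop :=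
  A ∪ B = Set.univ ∧ ∀ a ∈ A \ B, ∀ b ∈ B \ A, ¬ G.Adj a b

/-- A separation is proper if neither side contains the other. -/
def ProperSep (A B : Set V) : Prop := ¬ A ⊆ B ∧ ¬ B ⊆ A

/-- `G` is `k`-connected. -/
def KConn (G : SimpleGraph V) [Fintype V] (k : ℕ) : Prop :=
  k < Fintype.card V ∧ ∀ S : Finset V, S.card < k → ∀ u v : V, ¬ SepBy G (S : Set V) u v

/-- `(A,B)` is a T-shaped `k`-separation of `G`. -/
def TShaped (G : SimpleGraph V) (k : ℕ) (A B : Set V) : Prop :=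
  IsSepn G A B ∧ ProperSep A B ∧ (A ∩ B).ncard = k ∧
    ∃ C D : Set V, IsSepn G C D ∧ ProperSep C D ∧ (C ∩ D).ncard = k ∧
      A \ B ⊆ C ∩ D ∧ (A ∩ C).ncard ≤ k ∧ (A ∩ D).ncard ≤ k
section Aux

open Set

variable {G : SimpleGraph V} {A B C D X : Set V} {k : ℕ} {u v : V}

lemma IsSepn.symm (h : IsSepn G A B) : IsSepn G B A :=
  ⟨by rw [Set.union_comm]; exact h.1,
   fun b hb a ha hadj => h.2 a ha b hb hadj.symm⟩

lemma walk_meets (hsep : IsSepn G C D) {a b : V} (p : G.Walk a b) :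
    b ∈ D → b ∉ C → a ∈ C → a ∉ D → ∃ w ∈ p.support, w ∈ C ∩ D := by
  induction p with
  | nil => intro hbD _ _ h2; exact absurd hbD h2
  | @cons a x b h q ih =>
    intro hbD hbC haC haD
    by_cases hx : x ∈ C ∩ D
    · exact ⟨x, by simp, hx⟩
    · have hxCD : x ∈ C ∪ D := by rw [hsep.1]; trivial
      rcases hxCD with hxC | hxD
      · have hxD : x ∉ D := fun hd => hx ⟨hxC, hd⟩
        obtain ⟨w, hw, hw2⟩ := ih hbD hbC hxC hxD
        exact ⟨w, by simp [hw], hw2⟩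
      · have hxC : x ∉ C := fun hc => hx ⟨hc, hxD⟩
        exact absurd h (hsep.2 a ⟨haC, haD⟩ x ⟨hxD, hxC⟩)

lemma sepBy_of_sep (hsep : IsSepn G C D) (ha : u ∈ C \ D) (hb : v ∈ D \ C) :
    SepBy G (C ∩ D) u v :=
  ⟨fun h => ha.2 h.2, fun h => hb.2 h.1,
   fun p => by
     obtain ⟨w, hw, hw2⟩ := walk_meets hsep.symm p.reverse ha.1 ha.2 hb.1 hb.2
     exact ⟨w, by simpa using hw, ⟨hw2.2, hw2.1⟩⟩⟩

end Aux
section Aux2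

open Set

variable [Fintype V] {G : SimpleGraph V} {A B C D X : Set V} {k : ℕ} {u v : V}

lemma order_ge (hconn : KConn G k) (hsep : IsSepn G C D)
    (ha : u ∈ C \ D) (hb : v ∈ D \ C) : k ≤ (C ∩ D).ncard := by
  by_contra h
  push_neg at h
  have hfin : (C ∩ D).Finite := Set.toFinite _
  have hcard : hfin.toFinset.card < k := by
    rwa [← Set.ncard_eq_toFinset_card _ hfin]
  have hsb : SepBy G (↑hfin.toFinset) u v := by
    rw [Set.Finite.coe_toFinset]
    exact sepBy_of_sep hsep ha hb
  exact hconn.2 _ hcard u v hsb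

lemma insep_mono (h : Insep G k X) {Y : Set V} (hY : Y ⊆ X) : Insep G k Y :=
  fun S hS x hx y hy => h S hS x (hY hx) y (hY hy)

/-- an inseparable set lies on one side of a separation of order at most `k`. -/
lemma insep_side (hsep : IsSepn G A B) (hord : (A ∩ B).ncard ≤ k)
    (hX : Insep G k X) : X ⊆ A ∨ X ⊆ B := by
  by_contra h
  push_neg at h
  obtain ⟨x, hxX, hxA⟩ := Set.not_subset.1 h.1
  obtain ⟨y, hyX, hyB⟩ := Set.not_subset.1 h.2
  have hxB : x ∈ B := by
    have := hsep.1 ▸ Set.mem_univ x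
    rcases (Set.mem_union ..).1 ((hsep.1.symm ▸ Set.mem_univ x : x ∈ A ∪ B)) with h1 | h1
    · exact absurd h1 hxA
    · exact h1
  have hyA : y ∈ A := by
    rcases (Set.mem_union ..).1 ((hsep.1.symm ▸ Set.mem_univ y : y ∈ A ∪ B)) with h1 | h1
    · exact h1
    · exact absurd h1 hyB
  have hfin : (A ∩ B).Finite := Set.toFinite _
  have hcard : hfin.toFinset.card ≤ k := by
    rwa [← Set.ncard_eq_toFinset_card _ hfin]
  refine hX hfin.toFinset hcard y hyX x hxX ?_
  rw [Set.Finite.coe_toFinset]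
  exact sepBy_of_sep hsep ⟨hyA, hyB⟩ ⟨hxB, hxA⟩

lemma exists_block (hX : Insep G k X) (hcard : k + 1 ≤ X.ncard) :
    ∃ X' : Set V, X ⊆ X' ∧ IsBlockN G (k + 1) X' := by
  classical
  have hfam : {Y : Set V | X ⊆ Y ∧ Insep G k Y}.Finite := Set.toFinite _
  have hne : {Y : Set V | X ⊆ Y ∧ Insep G k Y}.Nonempty := ⟨X, subset_rfl, hX⟩
  obtain ⟨Y, hY, hmax⟩ := Set.Finite.exists_maximalFor Set.ncard _ hfam hne
  refine ⟨Y, hY.1, ?_, ?_, ?_⟩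
  · simpa using le_trans hcard (Set.ncard_le_ncard hY.1 (Set.toFinite _))
  · simpa using hY.2
  · intro B' hB1 hB2
    have hB2' : Insep G k B' := by simpa using hB2
    have hmem : B' ∈ {Y : Set V | X ⊆ Y ∧ Insep G k Y} := ⟨hY.1.trans hB1, hB2'⟩
    have hle : Y.ncard ≤ B'.ncard := Set.ncard_le_ncard hB1 (Set.toFinite _)
    have := hmax hmem hle
    exact (Set.eq_of_subset_of_ncard_le hB1 this (Set.toFinite _)).symm

lemma corner_sep (h1 : IsSepn G A B) (h2 : IsSepn G C D) :
    IsSepn G (A ∩ C) (B ∪ D) := by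
  constructor
  · apply Set.eq_univ_of_forall
    intro x
    have hx1 : x ∈ A ∪ B := h1.1.symm ▸ Set.mem_univ x
    have hx2 : x ∈ C ∪ D := h2.1.symm ▸ Set.mem_univ x
    by_cases hB : x ∈ B
    · exact Or.inr (Or.inl hB)
    by_cases hD : x ∈ D
    · exact Or.inr (Or.inr hD)
    · exact Or.inl ⟨hx1.resolve_right hB, hx2.resolve_right hD⟩
  · rintro x ⟨⟨hxA, hxC⟩, hxBD⟩ y ⟨hyBD, hyAC⟩
    have hxB : x ∉ B := fun h => hxBD (Or.inl h)
    have hxD : x ∉ D := fun h => hxBD (Or.inr h)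
    rcases hyBD with hyB | hyD
    · by_cases hyA : y ∈ A
      · have hyC : y ∉ C := fun h => hyAC ⟨hyA, h⟩
        have hyD : y ∈ D := (h2.1.symm ▸ Set.mem_univ y : y ∈ C ∪ D).resolve_left hyC
        exact h2.2 x ⟨hxC, hxD⟩ y ⟨hyD, hyC⟩
      · exact h1.2 x ⟨hxA, hxB⟩ y ⟨hyB, hyA⟩
    · by_cases hyC : y ∈ C
      · have hyA : y ∉ A := fun h => hyAC ⟨h, hyC⟩
        have hyB : y ∈ B := (h1.1.symm ▸ Set.mem_univ y : y ∈ A ∪ B).resolve_left hyA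
        exact h1.2 x ⟨hxA, hxB⟩ y ⟨hyB, hyA⟩
      · exact h2.2 x ⟨hxC, hxD⟩ y ⟨hyD, hyC⟩

lemma submod (A B C D : Set V) :
    ((A ∩ C) ∩ (B ∪ D)).ncard + ((B ∩ D) ∩ (A ∪ C)).ncard
      ≤ (A ∩ B).ncard + (C ∩ D).ncard := by
  have h1 : ((A ∩ C) ∩ (B ∪ D)) ∪ ((B ∩ D) ∩ (A ∪ C)) ⊆ (A ∩ B) ∪ (C ∩ D) := by
    rintro x (⟨⟨hA, hC⟩, hBD⟩ | ⟨⟨hB, hD⟩, hAC⟩)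
    · rcases hBD with hB | hD
      · exact Or.inl ⟨hA, hB⟩
      · exact Or.inr ⟨hC, hD⟩
    · rcases hAC with hA | hC
      · exact Or.inl ⟨hA, hB⟩
      · exact Or.inr ⟨hC, hD⟩
  have h2 : ((A ∩ C) ∩ (B ∪ D)) ∩ ((B ∩ D) ∩ (A ∪ C)) ⊆ (A ∩ B) ∩ (C ∩ D) := by
    rintro x ⟨⟨⟨hA, hC⟩, _⟩, ⟨⟨hB, hD⟩, _⟩⟩
    exact ⟨⟨hA, hB⟩, hC, hD⟩
  calc ((A ∩ C) ∩ (B ∪ D)).ncard + ((B ∩ D) ∩ (A ∪ C)).ncard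
      = (((A ∩ C) ∩ (B ∪ D)) ∪ ((B ∩ D) ∩ (A ∪ C))).ncard
        + (((A ∩ C) ∩ (B ∪ D)) ∩ ((B ∩ D) ∩ (A ∪ C))).ncard := by
        rw [Set.ncard_union_add_ncard_inter _ _ (Set.toFinite _) (Set.toFinite _)]
    _ ≤ ((A ∩ B) ∪ (C ∩ D)).ncard + ((A ∩ B) ∩ (C ∩ D)).ncard := by
        exact Nat.add_le_add (Set.ncard_le_ncard h1 (Set.toFinite _))
          (Set.ncard_le_ncard h2 (Set.toFinite _))
    _ = (A ∩ B).ncard + (C ∩ D).ncard := by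
        rw [Set.ncard_union_add_ncard_inter _ _ (Set.toFinite _) (Set.toFinite _)]

lemma sep_of_sepBy (T : Finset V) (h : SepBy G (↑T) u v) :
    ∃ C D : Set V, IsSepn G C D ∧ C ∩ D = ↑T ∧ u ∈ C \ D ∧ v ∈ D \ C := by
  classical
  set R : Set V := {x | ∃ p : G.Walk u x, ∀ w ∈ p.support, w ∉ (↑T : Set V)} with hR
  have huR : u ∈ R := ⟨SimpleGraph.Walk.nil, by simpa using h.1⟩
  have hTR : ∀ x ∈ R, x ∉ (↑T : Set V) := by
    rintro x ⟨p, hp⟩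
    exact hp x p.end_mem_support
  have hvR : v ∉ R := by
    rintro ⟨p, hp⟩
    obtain ⟨w, hw, hw2⟩ := h.2.2 p
    exact hp w hw hw2
  refine ⟨R ∪ ↑T, Rᶜ, ⟨?_, ?_⟩, ?_, ?_, ?_⟩
  · apply Set.eq_univ_of_forall
    intro x
    by_cases hx : x ∈ R
    · exact Or.inl (Or.inl hx)
    · exact Or.inr hx
  · rintro x ⟨hxRT, hxR⟩ y ⟨hyR, hyRT⟩ hadj
    have hxR' : x ∈ R := Set.not_notMem.1 hxR
    have hyT : y ∉ (↑T : Set V) := fun hy => hyRT (Or.inr hy)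
    obtain ⟨p, hp⟩ := hxR'
    refine hyR ⟨p.concat hadj, ?_⟩
    intro w hw
    rw [SimpleGraph.Walk.support_concat] at hw
    rcases List.mem_append.1 hw with h1 | h1
    · exact hp w h1
    · simp at h1; subst h1; exact hyT
  · ext x
    simp only [Set.mem_inter_iff, Set.mem_union, Set.mem_compl_iff]
    constructor
    · rintro ⟨h1 | h1, h2⟩
      · exact absurd h1 h2
      · exact h1
    · intro hx
      exact ⟨Or.inr hx, fun hxR => hTR x hxR hx⟩
  · exact ⟨Or.inl huR, by simpa using huR⟩
  · exact ⟨hvR, by rintro (h1 | h1); exact hvR h1; exact h.2.1 h1⟩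

end Aux2
section Main

open Set

variable [Fintype V] {G : SimpleGraph V} {A B C D X : Set V} {k : ℕ} {u v : V}

/-- The family of proper k-separations whose first side contains no large inseparable set. -/
def Fam (G : SimpleGraph V) (k : ℕ) (P Q : Set V) : Prop :=
  IsSepn G P Q ∧ ProperSep P Q ∧ (P ∩ Q).ncard = k ∧
    ∀ X ⊆ P, Insep G k X → X.ncard ≤ k

lemma claim1 (hconn : KConn G k) (hsep : IsSepn G A B) (horder : (A ∩ B).ncard = k)
    (hH : ∀ X ⊆ A, Insep G k X → X.ncard ≤ k)
    (hmin : ∀ P Q : Set V, Fam G k P Q → A.ncard ≤ P.ncard)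
    (hsepCD : IsSepn G C D) (horderM : (C ∩ D).ncard = k)
    (hu : u ∈ C \ D) (hv : v ∈ D \ C) (huA : u ∈ A) (hvA : v ∈ A) :
    (A \ B) ∩ (C \ D) = ∅ := by
  by_contra hne
  obtain ⟨a, ha⟩ := Set.nonempty_iff_ne_empty.2 hne
  have haA : a ∈ A := ha.1.1
  have haB : a ∉ B := ha.1.2
  have haC : a ∈ C := ha.2.1
  have haD : a ∉ D := ha.2.2
  -- the corner (A ∩ C, B ∪ D)
  have hP1sep : IsSepn G (A ∩ C) (B ∪ D) := corner_sep hsep hsepCD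
  have haP1 : a ∈ (A ∩ C) \ (B ∪ D) :=
    ⟨⟨haA, haC⟩, by rintro (h | h); exacts [haB h, haD h]⟩
  have hvQ1 : v ∈ (B ∪ D) \ (A ∩ C) := ⟨Or.inr hv.1, fun h => hv.2 h.2⟩
  have h1k : k ≤ ((A ∩ C) ∩ (B ∪ D)).ncard := order_ge hconn hP1sep haP1 hvQ1
  have h1k' : k + 1 ≤ ((A ∩ C) ∩ (B ∪ D)).ncard := by
    rcases eq_or_lt_of_le h1k with heq | hlt
    · exfalso
      have hFam : Fam G k (A ∩ C) (B ∪ D) :=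
        ⟨hP1sep, ⟨fun hsub => haP1.2 (hsub haP1.1), fun hsub => hvQ1.2 (hsub hvQ1.1)⟩,
          heq.symm, fun X hX hins => hH X (hX.trans Set.inter_subset_left) hins⟩
      have hle : A.ncard ≤ (A ∩ C).ncard := hmin _ _ hFam
      have hAC : A ∩ C = A :=
        Set.eq_of_subset_of_ncard_le Set.inter_subset_left hle (Set.toFinite _)
      have hvAC : v ∈ A ∩ C := by rw [hAC]; exact hvA
      exact hv.2 hvAC.2
    · exact hlt
  -- (B \ A) ∩ (D \ C) = ∅
  have hb3 : (B \ A) ∩ (D \ C) = ∅ := by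
    by_contra hne3
    obtain ⟨b, hb⟩ := Set.nonempty_iff_ne_empty.2 hne3
    have hP4sep : IsSepn G (B ∩ D) (A ∪ C) := corner_sep hsep.symm hsepCD.symm
    have hbP4 : b ∈ (B ∩ D) \ (A ∪ C) :=
      ⟨⟨hb.1.1, hb.2.1⟩, by rintro (h | h); exacts [hb.1.2 h, hb.2.2 h]⟩
    have huQ4 : u ∈ (A ∪ C) \ (B ∩ D) := ⟨Or.inl huA, fun h => hu.2 h.2⟩
    have h4k : k ≤ ((B ∩ D) ∩ (A ∪ C)).ncard := order_ge hconn hP4sep hbP4 huQ4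
    have hsm := submod A B C D
    rw [horder, horderM] at hsm
    omega
  by_cases hn3 : (A \ B) ∩ (D \ C) = ∅
  · -- Case III : D \ C ⊆ A ∩ B, contradict minimality with the side D
    have hDCS : D \ C ⊆ A ∩ B := by
      intro x hx
      have hxAB : x ∈ A ∪ B := hsep.1.symm ▸ Set.mem_univ x
      rcases hxAB with hxA | hxB
      · by_cases hxB : x ∈ B
        · exact ⟨hxA, hxB⟩
        · exact absurd ((⟨⟨hxA, hxB⟩, hx⟩ : x ∈ (A \ B) ∩ (D \ C))) (Set.eq_empty_iff_forall_notMem.1 hn3 x)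
      · by_cases hxA : x ∈ A
        · exact ⟨hxA, hxB⟩
        · exact absurd ((⟨⟨hxB, hxA⟩, hx⟩ : x ∈ (B \ A) ∩ (D \ C))) (Set.eq_empty_iff_forall_notMem.1 hb3 x)
    have hBDsub : B ∩ D ⊆ A ∪ C := by
      intro x hx
      by_contra hxn
      rw [Set.mem_union] at hxn
      push_neg at hxn
      exact absurd ((⟨⟨hx.1, hxn.1⟩, hx.2, hxn.2⟩ : x ∈ (B \ A) ∩ (D \ C))) (Set.eq_empty_iff_forall_notMem.1 hb3 x)
    have hBDcard : (B ∩ D).ncard + (k + 1) ≤ 2 * k := by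
      have hsm := submod A B C D
      rw [horder, horderM, Set.inter_eq_self_of_subset_left hBDsub] at hsm
      omega
    have hHD : ∀ X ⊆ D, Insep G k X → X.ncard ≤ k := by
      intro X hXD hins
      by_contra hXc
      push_neg at hXc
      rcases insep_side hsep horder.le hins with hXA | hXB
      · exact absurd (hH X hXA hins) (by omega)
      · have h1 : X ⊆ B ∩ D := Set.subset_inter hXB hXD
        have h2 := Set.ncard_le_ncard h1 (Set.toFinite _)
        omega
    have hFamD : Fam G k D C :=
      ⟨hsepCD.symm, ⟨fun hsub => hv.2 (hsub hv.1), fun hsub => hu.2 (hsub hu.1)⟩,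
        by rwa [Set.inter_comm], hHD⟩
    have hminD : A.ncard ≤ D.ncard := hmin _ _ hFamD
    -- arithmetic
    have hmidsub : (A ∩ C) ∩ (B ∪ D) ⊆ (A ∩ B ∩ C) ∪ ((A \ B) ∩ (C ∩ D)) := by
      rintro x ⟨⟨hxA, hxC⟩, hxBD⟩
      by_cases hxB : x ∈ B
      · exact Or.inl ⟨⟨hxA, hxB⟩, hxC⟩
      · rcases hxBD with h | h
        · exact absurd h hxB
        · exact Or.inr ⟨⟨hxA, hxB⟩, hxC, h⟩
    have e1 : ((A ∩ C) ∩ (B ∪ D)).ncard ≤ (A ∩ B ∩ C).ncard + ((A \ B) ∩ (C ∩ D)).ncard :=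
      le_trans (Set.ncard_le_ncard hmidsub (Set.toFinite _)) (Set.ncard_union_le _ _)
    have e2 : (A ∩ B ∩ C).ncard + ((A ∩ B) \ C).ncard = k := by
      rw [Set.ncard_inter_add_ncard_diff_eq_ncard (A ∩ B) C (Set.toFinite _)]; exact horder
    have e3 : (D \ C).ncard ≤ ((A ∩ B) \ C).ncard :=
      Set.ncard_le_ncard (fun x hx => ⟨hDCS hx, hx.2⟩) (Set.toFinite _)
    have e4 : ((A \ B) ∩ (C ∩ D)).ncard ≤ (A \ B).ncard :=
      Set.ncard_le_ncard Set.inter_subset_left (Set.toFinite _)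
    have e5 : (A ∩ B).ncard + (A \ B).ncard = A.ncard :=
      Set.ncard_inter_add_ncard_diff_eq_ncard A B (Set.toFinite _)
    have e6 : (D ∩ C).ncard + (D \ C).ncard = D.ncard :=
      Set.ncard_inter_add_ncard_diff_eq_ncard D C (Set.toFinite _)
    have e7 : (D ∩ C).ncard = k := by rwa [Set.inter_comm]
    rw [horder] at e5
    omega
  · -- Case II : both strict sides of (C,D) meet A \ B; contradict minimality with side C
    obtain ⟨a', ha'⟩ := Set.nonempty_iff_ne_empty.2 hn3
    have hP2sep : IsSepn G (A ∩ D) (B ∪ C) := corner_sep hsep hsepCD.symm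
    have ha'P2 : a' ∈ (A ∩ D) \ (B ∪ C) :=
      ⟨⟨ha'.1.1, ha'.2.1⟩, by rintro (h | h); exacts [ha'.1.2 h, ha'.2.2 h]⟩
    have huQ2 : u ∈ (B ∪ C) \ (A ∩ D) := ⟨Or.inr hu.1, fun h => hu.2 h.2⟩
    have h2k : k ≤ ((A ∩ D) ∩ (B ∪ C)).ncard := order_ge hconn hP2sep ha'P2 huQ2
    have h2k' : k + 1 ≤ ((A ∩ D) ∩ (B ∪ C)).ncard := by
      rcases eq_or_lt_of_le h2k with heq | hlt
      · exfalso
        have hFam : Fam G k (A ∩ D) (B ∪ C) :=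
          ⟨hP2sep, ⟨fun hsub => ha'P2.2 (hsub ha'P2.1), fun hsub => huQ2.2 (hsub huQ2.1)⟩,
            heq.symm, fun X hX hins => hH X (hX.trans Set.inter_subset_left) hins⟩
        have hle : A.ncard ≤ (A ∩ D).ncard := hmin _ _ hFam
        have hAD : A ∩ D = A :=
          Set.eq_of_subset_of_ncard_le Set.inter_subset_left hle (Set.toFinite _)
        have huAD : u ∈ A ∩ D := by rw [hAD]; exact huA
        exact hu.2 huAD.2
      · exact hlt
    have hb1 : (B \ A) ∩ (C \ D) = ∅ := by
      by_contra hne1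
      obtain ⟨b, hb⟩ := Set.nonempty_iff_ne_empty.2 hne1
      have hP3sep : IsSepn G (B ∩ C) (A ∪ D) := corner_sep hsep.symm hsepCD
      have hbP3 : b ∈ (B ∩ C) \ (A ∪ D) :=
        ⟨⟨hb.1.1, hb.2.1⟩, by rintro (h | h); exacts [hb.1.2 h, hb.2.2 h]⟩
      have hvQ3 : v ∈ (A ∪ D) \ (B ∩ C) := ⟨Or.inl hvA, fun h => hv.2 h.2⟩
      have h3k : k ≤ ((B ∩ C) ∩ (A ∪ D)).ncard := order_ge hconn hP3sep hbP3 hvQ3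
      have hsm := submod A B D C
      rw [horder, Set.inter_comm D C, horderM] at hsm
      omega
    have hCDA : C \ D ⊆ A := by
      intro x hx
      by_contra hxA
      have hxB : x ∈ B := ((hsep.1.symm ▸ Set.mem_univ x : x ∈ A ∪ B)).resolve_left hxA
      exact absurd ((⟨⟨hxB, hxA⟩, hx⟩ : x ∈ (B \ A) ∩ (C \ D))) (Set.eq_empty_iff_forall_notMem.1 hb1 x)
    have hBCsub : B ∩ C ⊆ A ∪ D := by
      intro x hx
      by_contra hxn
      rw [Set.mem_union] at hxn
      push_neg at hxn
      exact absurd ((⟨⟨hx.1, hxn.1⟩, hx.2, hxn.2⟩ : x ∈ (B \ A) ∩ (C \ D))) (Set.eq_empty_iff_forall_notMem.1 hb1 x)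
    have hBCcard : (B ∩ C).ncard + (k + 1) ≤ 2 * k := by
      have hsm := submod A B D C
      rw [horder, Set.inter_comm D C, horderM,
        Set.inter_eq_self_of_subset_left hBCsub] at hsm
      omega
    have hHC : ∀ X ⊆ C, Insep G k X → X.ncard ≤ k := by
      intro X hXC hins
      by_contra hXc
      push_neg at hXc
      rcases insep_side hsep horder.le hins with hXA | hXB
      · exact absurd (hH X hXA hins) (by omega)
      · have h1 : X ⊆ B ∩ C := Set.subset_inter hXB hXC
        have h2 := Set.ncard_le_ncard h1 (Set.toFinite _)
        omega
    have hFamC : Fam G k C D :=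
      ⟨hsepCD, ⟨fun hsub => hu.2 (hsub hu.1), fun hsub => hv.2 (hsub hv.1)⟩, horderM, hHC⟩
    have hminC : A.ncard ≤ C.ncard := hmin _ _ hFamC
    -- arithmetic
    have hmidsub : (A ∩ D) ∩ (B ∪ C) ⊆ (A ∩ B ∩ D) ∪ ((A \ B) ∩ (C ∩ D)) := by
      rintro x ⟨⟨hxA, hxD⟩, hxBC⟩
      by_cases hxB : x ∈ B
      · exact Or.inl ⟨⟨hxA, hxB⟩, hxD⟩
      · rcases hxBC with h | h
        · exact absurd h hxB
        · exact Or.inr ⟨⟨hxA, hxB⟩, h, hxD⟩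
    have e1 : ((A ∩ D) ∩ (B ∪ C)).ncard ≤ (A ∩ B ∩ D).ncard + ((A \ B) ∩ (C ∩ D)).ncard :=
      le_trans (Set.ncard_le_ncard hmidsub (Set.toFinite _)) (Set.ncard_union_le _ _)
    have e2 : (A ∩ B ∩ D).ncard + ((A ∩ B) \ D).ncard = k := by
      rw [Set.ncard_inter_add_ncard_diff_eq_ncard (A ∩ B) D (Set.toFinite _)]; exact horder
    have e3 : (C \ D).ncard ≤ ((A \ B) \ D).ncard + ((A ∩ B) \ D).ncard := by
      refine le_trans (Set.ncard_le_ncard ?_ (Set.toFinite _)) (Set.ncard_union_le _ _)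
      intro x hx
      by_cases hxB : x ∈ B
      · exact Or.inr ⟨⟨hCDA hx, hxB⟩, hx.2⟩
      · exact Or.inl ⟨⟨hCDA hx, hxB⟩, hx.2⟩
    have e4 : ((A \ B) ∩ D).ncard + ((A \ B) \ D).ncard = (A \ B).ncard :=
      Set.ncard_inter_add_ncard_diff_eq_ncard (A \ B) D (Set.toFinite _)
    have e4' : ((A \ B) ∩ (C ∩ D)).ncard ≤ ((A \ B) ∩ D).ncard :=
      Set.ncard_le_ncard (fun x hx => ⟨hx.1, hx.2.2⟩) (Set.toFinite _)
    have e5 : (A ∩ B).ncard + (A \ B).ncard = A.ncard :=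
      Set.ncard_inter_add_ncard_diff_eq_ncard A B (Set.toFinite _)
    have e6 : (C ∩ D).ncard + (C \ D).ncard = C.ncard :=
      Set.ncard_inter_add_ncard_diff_eq_ncard C D (Set.toFinite _)
    rw [horder] at e5
    rw [horderM] at e6
    omega

lemma claim3 (hconn : KConn G k) (hsep : IsSepn G A B) (horder : (A ∩ B).ncard = k)
    (hH : ∀ X ⊆ A, Insep G k X → X.ncard ≤ k)
    (hmin : ∀ P Q : Set V, Fam G k P Q → A.ncard ≤ P.ncard)
    (hsepCD : IsSepn G C D) (horderM : (C ∩ D).ncard = k)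
    (hu : u ∈ C \ D) (hv : v ∈ D \ C) (huA : u ∈ A) (hvA : v ∈ A)
    (hn1 : (A \ B) ∩ (C \ D) = ∅) (hn3 : (A \ B) ∩ (D \ C) = ∅) :
    (A ∩ C).ncard ≤ k := by
  by_contra hbig
  push_neg at hbig
  have hACsub : A ∩ C ⊆ B ∪ D := by
    intro x hx
    by_contra hxn
    rw [Set.mem_union] at hxn
    push_neg at hxn
    exact absurd ((⟨⟨hx.1, hxn.1⟩, hx.2, hxn.2⟩ : x ∈ (A \ B) ∩ (C \ D))) (Set.eq_empty_iff_forall_notMem.1 hn1 x)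
  have hb3 : (B \ A) ∩ (D \ C) = ∅ := by
    by_contra hne3
    obtain ⟨b, hb⟩ := Set.nonempty_iff_ne_empty.2 hne3
    have hP4sep : IsSepn G (B ∩ D) (A ∪ C) := corner_sep hsep.symm hsepCD.symm
    have hbP4 : b ∈ (B ∩ D) \ (A ∪ C) :=
      ⟨⟨hb.1.1, hb.2.1⟩, by rintro (h | h); exacts [hb.1.2 h, hb.2.2 h]⟩
    have huQ4 : u ∈ (A ∪ C) \ (B ∩ D) := ⟨Or.inl huA, fun h => hu.2 h.2⟩
    have h4k : k ≤ ((B ∩ D) ∩ (A ∪ C)).ncard := order_ge hconn hP4sep hbP4 huQ4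
    have hsm := submod A B C D
    rw [horder, horderM, Set.inter_eq_self_of_subset_left hACsub] at hsm
    omega
  have hBDsub : B ∩ D ⊆ A ∪ C := by
    intro x hx
    by_contra hxn
    rw [Set.mem_union] at hxn
    push_neg at hxn
    exact absurd ((⟨⟨hx.1, hxn.1⟩, hx.2, hxn.2⟩ : x ∈ (B \ A) ∩ (D \ C))) (Set.eq_empty_iff_forall_notMem.1 hb3 x)
  have hBDcard : (B ∩ D).ncard + (A ∩ C).ncard ≤ 2 * k := by
    have hsm := submod A B C D
    rw [horder, horderM, Set.inter_eq_self_of_subset_left hACsub,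
      Set.inter_eq_self_of_subset_left hBDsub] at hsm
    omega
  have hDCS : D \ C ⊆ A ∩ B := by
    intro x hx
    have hxAB : x ∈ A ∪ B := hsep.1.symm ▸ Set.mem_univ x
    rcases hxAB with hxA | hxB
    · by_cases hxB : x ∈ B
      · exact ⟨hxA, hxB⟩
      · exact absurd ((⟨⟨hxA, hxB⟩, hx⟩ : x ∈ (A \ B) ∩ (D \ C))) (Set.eq_empty_iff_forall_notMem.1 hn3 x)
    · by_cases hxA : x ∈ A
      · exact ⟨hxA, hxB⟩
      · exact absurd ((⟨⟨hxB, hxA⟩, hx⟩ : x ∈ (B \ A) ∩ (D \ C))) (Set.eq_empty_iff_forall_notMem.1 hb3 x)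
  have hHD : ∀ X ⊆ D, Insep G k X → X.ncard ≤ k := by
    intro X hXD hins
    by_contra hXc
    push_neg at hXc
    rcases insep_side hsep horder.le hins with hXA | hXB
    · exact absurd (hH X hXA hins) (by omega)
    · have h1 : X ⊆ B ∩ D := Set.subset_inter hXB hXD
      have h2 := Set.ncard_le_ncard h1 (Set.toFinite _)
      omega
  have hFamD : Fam G k D C :=
    ⟨hsepCD.symm, ⟨fun hsub => hv.2 (hsub hv.1), fun hsub => hu.2 (hsub hu.1)⟩,
      by rwa [Set.inter_comm], hHD⟩
  have hminD : A.ncard ≤ D.ncard := hmin _ _ hFamD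
  -- arithmetic
  have e1 : (A ∩ C).ncard ≤ (A \ B).ncard + (A ∩ B ∩ C).ncard := by
    refine le_trans (Set.ncard_le_ncard ?_ (Set.toFinite _)) (Set.ncard_union_le _ _)
    intro x hx
    by_cases hxB : x ∈ B
    · exact Or.inr ⟨⟨hx.1, hxB⟩, hx.2⟩
    · exact Or.inl ⟨hx.1, hxB⟩
  have e2 : (A ∩ B ∩ C).ncard + ((A ∩ B) \ C).ncard = k := by
    rw [Set.ncard_inter_add_ncard_diff_eq_ncard (A ∩ B) C (Set.toFinite _)]; exact horder
  have e3 : (D \ C).ncard ≤ ((A ∩ B) \ C).ncard :=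
    Set.ncard_le_ncard (fun x hx => ⟨hDCS hx, hx.2⟩) (Set.toFinite _)
  have e5 : (A ∩ B).ncard + (A \ B).ncard = A.ncard :=
    Set.ncard_inter_add_ncard_diff_eq_ncard A B (Set.toFinite _)
  have e6 : (D ∩ C).ncard + (D \ C).ncard = D.ncard :=
    Set.ncard_inter_add_ncard_diff_eq_ncard D C (Set.toFinite _)
  have e7 : (D ∩ C).ncard = k := by rwa [Set.inter_comm]
  rw [horder] at e5
  omega

end Main
section Final

open Set

variable [Fintype V] {G : SimpleGraph V} {A B C D X : Set V} {k : ℕ} {u v : V}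

lemma main_lemma (hconn : KConn G k) (hRHS : ∀ P Q : Set V, ¬ TShaped G k P Q)
    (hFam : Fam G k A B) : False := by
  classical
  have hex : ∃ n, ∃ P Q : Set V, Fam G k P Q ∧ P.ncard = n := ⟨A.ncard, A, B, hFam, rfl⟩
  obtain ⟨A₁, B₁, hF1, hn1⟩ := Nat.find_spec hex
  have hmin : ∀ P Q : Set V, Fam G k P Q → A₁.ncard ≤ P.ncard := by
    intro P Q hPQ
    rw [hn1]
    exact Nat.find_le ⟨P, Q, hPQ, rfl⟩
  obtain ⟨hsep1, hprop1, hord1, hH1⟩ := hF1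
  have hNne : (A₁ \ B₁).Nonempty := by
    obtain ⟨x, hx1, hx2⟩ := Set.not_subset.1 hprop1.1
    exact ⟨x, hx1, hx2⟩
  have hsplit : (A₁ ∩ B₁).ncard + (A₁ \ B₁).ncard = A₁.ncard :=
    Set.ncard_inter_add_ncard_diff_eq_ncard A₁ B₁ (Set.toFinite _)
  have hNpos : 0 < (A₁ \ B₁).ncard := (Set.ncard_pos (Set.toFinite _)).2 hNne
  have hAcard : k + 1 ≤ A₁.ncard := by rw [hord1] at hsplit; omega
  have hnotins : ¬ Insep G k A₁ := by
    intro h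
    have := hH1 A₁ subset_rfl h
    omega
  unfold Insep at hnotins
  push_neg at hnotins
  obtain ⟨T, hTcard, u, huA, v, hvA, hSep⟩ := hnotins
  have hTk : T.card = k := by
    rcases lt_or_eq_of_le hTcard with h | h
    · exact absurd hSep (hconn.2 T h u v)
    · exact h
  obtain ⟨C, D, hsepCD, hCDT, hu, hv⟩ := sep_of_sepBy T hSep
  have horderM : (C ∩ D).ncard = k := by
    rw [hCDT, Set.ncard_coe_finset]; exact hTk
  have horderM' : (D ∩ C).ncard = k := by rwa [Set.inter_comm]
  have hc1 : (A₁ \ B₁) ∩ (C \ D) = ∅ :=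
    claim1 hconn hsep1 hord1 hH1 hmin hsepCD horderM hu hv huA hvA
  have hc2 : (A₁ \ B₁) ∩ (D \ C) = ∅ :=
    claim1 hconn hsep1 hord1 hH1 hmin hsepCD.symm horderM' hv hu hvA huA
  have hc3 : (A₁ ∩ C).ncard ≤ k :=
    claim3 hconn hsep1 hord1 hH1 hmin hsepCD horderM hu hv huA hvA hc1 hc2
  have hc4 : (A₁ ∩ D).ncard ≤ k :=
    claim3 hconn hsep1 hord1 hH1 hmin hsepCD.symm horderM' hv hu hvA huA hc2 hc1
  refine hRHS A₁ B₁ ⟨hsep1, hprop1, hord1, C, D, hsepCD,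
    ⟨fun hsub => hu.2 (hsub hu.1), fun hsub => hv.2 (hsub hv.1)⟩, horderM, ?_, hc3, hc4⟩
  intro x hx
  have hxCD : x ∈ C ∪ D := hsepCD.1.symm ▸ Set.mem_univ x
  rcases hxCD with hxC | hxD
  · by_cases hxD : x ∈ D
    · exact ⟨hxC, hxD⟩
    · exact absurd (⟨hx, hxC, hxD⟩ : x ∈ (A₁ \ B₁) ∩ (C \ D))
        (Set.eq_empty_iff_forall_notMem.1 hc1 x)
  · by_cases hxC : x ∈ C
    · exact ⟨hxC, hxD⟩
    · exact absurd (⟨hx, hxD, hxC⟩ : x ∈ (A₁ \ B₁) ∩ (D \ C))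
        (Set.eq_empty_iff_forall_notMem.1 hc2 x)

lemma H_of_noblock (hsep : IsSepn G A B) (horder : (A ∩ B).ncard = k)
    (hnob : ¬ ∃ X : Set V, IsBlockN G (k + 1) X ∧ X ⊆ A ∧ ¬ X ⊆ A ∩ B) :
    ∀ X ⊆ A, Insep G k X → X.ncard ≤ k := by
  intro X hXA hins
  by_contra h
  push_neg at h
  obtain ⟨X', hXX', hblock⟩ := exists_block hins (by omega)
  have hins' : Insep G k X' := by
    have := hblock.2.1
    simpa using this
  rcases insep_side hsep horder.le hins' with h1 | h1
  · refine hnob ⟨X', hblock, h1, fun hsub => ?_⟩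
    have h2 : X'.ncard ≤ k := horder ▸ Set.ncard_le_ncard hsub (Set.toFinite _)
    have h3 : X.ncard ≤ X'.ncard := Set.ncard_le_ncard hXX' (Set.toFinite _)
    omega
  · have h2 : X ⊆ A ∩ B := Set.subset_inter hXA (hXX'.trans h1)
    have h3 := Set.ncard_le_ncard h2 (Set.toFinite _)
    rw [horder] at h3
    omega

end Final

theorem stmt4 [Fintype V] (G : SimpleGraph V) (k : ℕ) (hconn : KConn G k) :
    (∀ A B : Set V, IsSepn G A B → ProperSep A B → (A ∩ B).ncard = k →
        ∃ X Y : Set V, IsBlockN G (k + 1) X ∧ IsBlockN G (k + 1) Y ∧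
          X ⊆ A ∧ Y ⊆ B ∧ ¬ X ⊆ A ∩ B ∧ ¬ Y ⊆ A ∩ B)
      ↔ ∀ A B : Set V, ¬ TShaped G k A B := by
  constructor
  · -- (i) → (ii)
    intro hLHS A B hTsh
    obtain ⟨hsep, hprop, hord, C, D, hsepCD, hpropCD, hordCD, hNsub, hAC, hAD⟩ := hTsh
    obtain ⟨X, Y, hXb, hYb, hXA, hYB, hXout, hYout⟩ := hLHS A B hsep hprop hord
    have hXins : Insep G k X := by
      have := hXb.2.1
      simpa using this
    have hXcard : k + 1 ≤ X.ncard := hXb.1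
    rcases insep_side hsepCD hordCD.le hXins with h1 | h1
    · have h2 : X ⊆ A ∩ C := Set.subset_inter hXA h1
      have h3 := Set.ncard_le_ncard h2 (Set.toFinite _)
      omega
    · have h2 : X ⊆ A ∩ D := Set.subset_inter hXA h1
      have h3 := Set.ncard_le_ncard h2 (Set.toFinite _)
      omega
  · -- (ii) → (i)
    intro hRHS A B hsep hprop hord
    by_contra hno
    have hcases : (¬ ∃ X : Set V, IsBlockN G (k + 1) X ∧ X ⊆ A ∧ ¬ X ⊆ A ∩ B) ∨
        (¬ ∃ Y : Set V, IsBlockN G (k + 1) Y ∧ Y ⊆ B ∧ ¬ Y ⊆ A ∩ B) := by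
      by_contra h
      push_neg at h
      obtain ⟨⟨X, hX1, hX2, hX3⟩, ⟨Y, hY1, hY2, hY3⟩⟩ := h
      exact hno ⟨X, Y, hX1, hY1, hX2, hY2, hX3, hY3⟩
    rcases hcases with h | h
    · exact (main_lemma hconn hRHS ⟨hsep, hprop, hord, H_of_noblock hsep hord h⟩).elim
    · have hord' : (B ∩ A).ncard = k := by rwa [Set.inter_comm]
      have h' : ¬ ∃ Y : Set V, IsBlockN G (k + 1) Y ∧ Y ⊆ B ∧ ¬ Y ⊆ B ∩ A := by
        rwa [Set.inter_comm B A]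
      exact (main_lemma hconn hRHS
        ⟨hsep.symm, ⟨hprop.2, hprop.1⟩, hord', H_of_noblock hsep.symm hord' h'⟩).elim
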